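/- Let u be the unique one-sided infinite word over {a, b} fixed by the Fibonacci substitution S(a) = ab, S(b) = a, let W_k = S^{k-1}(a) (so |W_k| = F_k with F₁ = 1, F₂ = 2, F_{k+1} = F_k + F_{k-1}). Call a finite subword w of u repeatable if the bi-infinite periodic sequence with unit cell w is a shift of the bi-infinite periodic sequence with unit cell u₀u₁⋯u_{|w|−1}. Then for every k ≥ 2, the word W_k W_k (concatenation) contains exactly F_k distinct subwords of length F_k, and all of them are repeatable. -/

import Mathlib

/-- The Fibonacci substitution words `S^k(a)` over the alphabet `{a, b}`, with `a = true`,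
`b = false`: `S^0(a) = a`, `S^1(a) = ab`, `S^{k+2}(a) = S^{k+1}(a) S^k(a)`.
Thus `fibWord (k-1)` is the word `W_k = S^{k-1}(a)`, of length `F_k`. -/
def fibWord : ℕ → List Bool
  | 0 => [true]
  | 1 => [true, false]
  | (k + 2) => fibWord (k + 1) ++ fibWord k

/-- The one-sided infinite fixed point `u = abaababaabaab…` of the Fibonacci substitution;
`fibWord (n + 2)` has length `> n` and all the words `fibWord k` are nested prefixes, so
this gives the `n`-th letter of `u`. -/
def uSeq (n : ℕ) : Bool := (fibWord (n + 2)).getD n true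

/-- `w` is a (finite) subword of `u`, i.e. a block of consecutive letters of `u`. -/
def subwordOfU (w : List Bool) : Prop :=
  ∃ i : ℕ, w = (List.range w.length).map fun j => uSeq (i + j)

/-- The bi-infinite periodic sequence with unit cell `w`. -/
def periodize (w : List Bool) (n : ℤ) : Bool :=
  w.getD (n % (w.length : ℤ)).toNat true

/-- `w` is repeatable: the bi-infinite periodic sequence with unit cell `w` is a shift of
the bi-infinite periodic sequence with unit cell `u₀u₁⋯u_{|w|−1}`. -/
def Repeatable (w : List Bool) : Prop :=
  ∃ s : ℤ, ∀ n : ℤ,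
    periodize w n = periodize ((List.range w.length).map uSeq) (n + s)

lemma count_true_fibWord : ∀ n, (fibWord n).count true = Nat.fib (n + 1)
  | 0 => by simp [fibWord]
  | 1 => by simp [fibWord]
  | (n+2) => by
    have a : (fibWord (n+1)).count true = Nat.fib (n+2) := count_true_fibWord (n+1)
    have b : (fibWord n).count true = Nat.fib (n+1) := count_true_fibWord n
    have e : Nat.fib (n+3) = Nat.fib (n+1) + Nat.fib (n+2) := Nat.fib_add_two
    show (fibWord (n+2)).count true = Nat.fib (n+3)
    rw [fibWord, List.count_append]
    omega

lemma count_false_fibWord : ∀ n, (fibWord n).count false = Nat.fib n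
  | 0 => by simp [fibWord]
  | 1 => by simp [fibWord]
  | (n+2) => by
    have a : (fibWord (n+1)).count false = Nat.fib (n+1) := count_false_fibWord (n+1)
    have b : (fibWord n).count false = Nat.fib n := count_false_fibWord n
    have e : Nat.fib (n+2) = Nat.fib n + Nat.fib (n+1) := Nat.fib_add_two
    rw [fibWord, List.count_append]
    omega

lemma lt_length_fibWord : ∀ n, n < (fibWord n).length
  | 0 => by simp [fibWord]
  | 1 => by simp [fibWord]
  | (n+2) => by
    have h1 := lt_length_fibWord (n+1)
    have h2 := lt_length_fibWord n
    rw [fibWord, List.length_append]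
    omega

lemma length_fibWord_pos (n : ℕ) : 0 < (fibWord n).length := by
  have := lt_length_fibWord n; omega

lemma fibWord_prefix_succ (n : ℕ) : fibWord n <+: fibWord (n + 1) := by
  match n with
  | 0 => exact ⟨[false], rfl⟩
  | (m+1) => exact ⟨fibWord m, rfl⟩

lemma fibWord_prefix {p q : ℕ} (h : p ≤ q) : fibWord p <+: fibWord q := by
  induction q with
  | zero => rw [Nat.le_zero.mp h]
  | succ q ih =>
    rcases Nat.lt_or_ge p (q+1) with h' | h'
    · exact (ih (by omega)).trans (fibWord_prefix_succ q)
    · rw [Nat.le_antisymm h h']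

lemma getD_fibWord_eq {p q j : ℕ} (hp : j < (fibWord p).length) (hq : j < (fibWord q).length) :
    (fibWord p).getD j true = (fibWord q).getD j true := by
  rw [List.getD_eq_getElem _ _ hp, List.getD_eq_getElem _ _ hq]
  rcases Nat.le_total p q with h | h
  · exact (fibWord_prefix h).getElem hp
  · exact ((fibWord_prefix h).getElem hq).symm

lemma uSeq_eq_getD {n j : ℕ} (h : j < (fibWord n).length) :
    uSeq j = (fibWord n).getD j true :=
  getD_fibWord_eq (by have := lt_length_fibWord (j+2); omega) h

lemma range_map_uSeq (n : ℕ) : (List.range (fibWord n).length).map uSeq = fibWord n := by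
  apply List.ext_getElem
  · simp
  · intro i h1 h2
    simp only [List.getElem_map, List.getElem_range]
    rw [uSeq_eq_getD h2, List.getD_eq_getElem _ _ h2]

lemma eq_flatten_of_rotate_eq {α : Type*} (g : ℕ) (hg : 0 < g) :
    ∀ N (l : List α), l.length = N → g ∣ l.length → l.rotate g = l →
      l = (List.replicate (l.length / g) (l.take g)).flatten := by
  intro N
  induction N using Nat.strong_induction_on with
  | _ N ih =>
    intro l hN hdvd hrot
    rcases Nat.lt_or_ge l.length (2 * g) with hsmall | hbig
    · obtain ⟨c, hc⟩ := hdvd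
      have hc2 : c < 2 := by nlinarith
      interval_cases c
      · have : l = [] := List.length_eq_zero_iff.mp (by omega)
        subst this; simp
      · have hlg : l.length = g := by omega
        rw [hlg, Nat.div_self hg, List.replicate_one, List.flatten_cons,
          List.flatten_nil, List.append_nil, List.take_of_length_le (le_of_eq hlg)]
    · have hgl : g ≤ l.length := by omega
      set x := l.take g with hx
      set y := l.drop g with hy
      have hxy : x ++ y = l := List.take_append_drop g l
      have hyx : y ++ x = l := by
        rw [← List.rotate_eq_drop_append_take hgl, hrot]
      have hylen : y.length = l.length - g := by rw [hy, List.length_drop]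
      have hgy : g ≤ y.length := by omega
      have hxlen : x.length = g := by rw [hx, List.length_take]; omega
      have hxy' : x = y.take g := by
        have : (x ++ y).take g = (y ++ x).take g := by rw [hxy, hyx]
        rwa [List.take_append, List.take_append,
          List.take_of_length_le (le_of_eq hxlen), hxlen, Nat.sub_self, List.take_zero,
          List.append_nil, Nat.sub_eq_zero_of_le hgy, List.take_zero, List.append_nil]
          at this
      have hyrot : y.rotate g = y := by
        have h2 : (x ++ y).drop g = (y ++ x).drop g := by rw [hxy, hyx]
        rw [List.drop_append, List.drop_append] at h2
        simp only [List.drop_of_length_le (le_of_eq hxlen), hxlen, Nat.sub_self,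
          List.drop_zero, List.nil_append, Nat.sub_eq_zero_of_le hgy] at h2
        rw [List.rotate_eq_drop_append_take hgy, ← hxy']
        exact h2.symm
      have hydvd : g ∣ y.length := by
        obtain ⟨c, hc⟩ := hdvd; refine ⟨c - 1, ?_⟩; rw [hylen, hc]
        cases c with
        | zero => omega
        | succ c => simp [Nat.mul_succ]
      have := ih y.length (by omega) y rfl hydvd hyrot
      rw [← hxy'] at this
      rw [← hxy]
      -- now l = x ++ y, y = flatten (replicate (y.length/g) x)
      have hcnt : (x ++ y).length / g = y.length / g + 1 := by
        rw [List.length_append, hxlen]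
        rw [Nat.add_comm, Nat.add_div_right _ hg]
      rw [hcnt, List.replicate_succ, List.flatten_cons]
      exact congrArg (x ++ ·) this

lemma rotate_pow {α : Type*} {l : List α} {d : ℕ} (h : l.rotate d = l) :
    ∀ t, l.rotate (d * t) = l
  | 0 => by simp
  | (t+1) => by
    rw [Nat.mul_succ, ← List.rotate_rotate, rotate_pow h t, h]

lemma rotate_gcd {α : Type*} {l : List α} {d : ℕ} (hd : 0 < d) (h : l.rotate d = l) :
    l.rotate (Nat.gcd d l.length) = l := by
  rcases Nat.eq_zero_or_pos l.length with h0 | hF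
  · rw [List.length_eq_zero_iff.mp h0]; simp
  set F := l.length with hFdef
  set g := Nat.gcd d F with hg
  have hgpos : 0 < g := Nat.gcd_pos_of_pos_left _ hd
  have hgd : g ∣ d := Nat.gcd_dvd_left _ _
  have hgF : g ∣ F := Nat.gcd_dvd_right _ _
  rcases Nat.lt_or_ge g F with hgltF | hgeF
  · have hcop : Nat.Coprime (d / g) (F / g) := Nat.coprime_div_gcd_div_gcd hgpos
    have hFg : 1 < F / g := by
      rcases hgF with ⟨c, hc⟩
      have hc1 : c ≠ 1 := by rintro rfl; omega
      have hc0 : c ≠ 0 := by rintro rfl; omega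
      rw [hc, Nat.mul_div_cancel_left _ hgpos]; omega
    obtain ⟨t, -, ht⟩ := Nat.exists_mul_mod_eq_one_of_coprime hcop hFg
    have h1' : g * (d / g) = d := Nat.mul_div_cancel' hgd
    have h2' : g * (F / g) = F := Nat.mul_div_cancel' hgF
    have hq : (d / g) * t = (F / g) * ((d / g) * t / (F / g)) + 1 := by
      conv_lhs => rw [← Nat.div_add_mod ((d / g) * t) (F / g)]
      rw [ht]
    have hdt : d * t = F * ((d / g) * t / (F / g)) + g := by
      calc d * t = g * ((d / g) * t) := by rw [← Nat.mul_assoc, h1']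
        _ = g * ((F / g) * ((d / g) * t / (F / g)) + 1) := by rw [← hq]
        _ = F * ((d / g) * t / (F / g)) + g := by
            rw [Nat.mul_add, Nat.mul_one, ← Nat.mul_assoc, h2']
    have hrt := rotate_pow h t
    rw [← List.rotate_mod] at hrt
    rw [← hFdef] at hrt
    rwa [hdt, Nat.mul_add_mod, Nat.mod_eq_of_lt hgltF] at hrt
  · have : g = F := Nat.le_antisymm (Nat.le_of_dvd hF hgF) hgeF
    rw [this, List.rotate_length]

lemma fibWord_rotate_ne (n d : ℕ) (h1 : 0 < d) (h2 : d < (fibWord n).length) :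
    (fibWord n).rotate d ≠ fibWord n := by
  intro hrot
  set W := fibWord n with hWdef
  set F := W.length with hFdef
  set g := Nat.gcd d F with hg
  have hgpos : 0 < g := Nat.gcd_pos_of_pos_left _ h1
  have hgd : g ≤ d := Nat.le_of_dvd h1 (Nat.gcd_dvd_left _ _)
  have hgF : g ∣ F := Nat.gcd_dvd_right _ _
  have hrotg : W.rotate g = W := rotate_gcd h1 hrot
  have hfl := eq_flatten_of_rotate_eq g hgpos F W rfl hgF hrotg
  set m := F / g with hm
  have hm2 : 2 ≤ m := by
    rcases hgF with ⟨c, hc⟩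
    have hc1 : c ≠ 1 := by rintro rfl; omega
    have hc0 : c ≠ 0 := by rintro rfl; omega
    rw [hm, hc, Nat.mul_div_cancel_left _ hgpos]; omega
  have key : ∀ b : Bool, W.count b = m * ((W.take g).count b) := by
    intro b
    conv_lhs => rw [hfl]
    rw [List.count_flatten, List.map_replicate, List.sum_replicate, smul_eq_mul]
  have hct : Nat.fib (n + 1) = m * ((W.take g).count true) := by
    rw [← count_true_fibWord n, ← hWdef]; exact key true
  have hcf : Nat.fib n = m * ((W.take g).count false) := by
    rw [← count_false_fibWord n, ← hWdef]; exact key false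
  have hdvd : m ∣ Nat.gcd (Nat.fib n) (Nat.fib (n + 1)) :=
    Nat.dvd_gcd ⟨_, hcf⟩ ⟨_, hct⟩
  rw [Nat.fib_coprime_fib_succ n] at hdvd
  have := Nat.le_of_dvd Nat.one_pos hdvd
  omega

lemma getElem_congr' {α : Type*} (l : List α) (a b : ℕ) (ha : a < l.length)
    (hb : b < l.length) (h : a = b) : l[a]'ha = l[b]'hb := by subst h; rfl

lemma take_drop_rotate {α : Type*} {l : List α} {i : ℕ} (h : i ≤ l.length) :
    ((l ++ l).drop i).take l.length = l.rotate i := by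
  rw [List.drop_append, Nat.sub_eq_zero_of_le h, List.drop_zero,
    List.take_append,
    List.take_of_length_le (by rw [List.length_drop]; omega),
    List.length_drop, List.rotate_eq_drop_append_take h]
  have : l.length - (l.length - i) = i := by omega
  rw [this]

lemma rotate_infix {α : Type*} (l : List α) {i : ℕ} (h : i ≤ l.length) :
    l.rotate i <:+: l ++ l := by
  refine ⟨l.take i, l.drop i, ?_⟩
  rw [List.rotate_eq_drop_append_take h]
  conv_rhs => rw [← List.take_append_drop i l]
  simp only [List.append_assoc]

lemma periodize_rotate (l : List Bool) (hl : 0 < l.length) (i : ℕ) (n : ℤ) :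
    periodize (l.rotate i) n = periodize l (n + (i : ℤ)) := by
  have hF : (0:ℤ) < (l.length : ℤ) := by exact_mod_cast hl
  unfold periodize
  rw [List.length_rotate]
  have hj : 0 ≤ n % (l.length:ℤ) := Int.emod_nonneg n (by omega)
  have hj2 : n % (l.length:ℤ) < l.length := Int.emod_lt_of_pos n hF
  have hj' : 0 ≤ (n + i) % (l.length:ℤ) := Int.emod_nonneg _ (by omega)
  have hj2' : (n + i) % (l.length:ℤ) < l.length := Int.emod_lt_of_pos _ hF
  set j := (n % (l.length:ℤ)).toNat with hjdef
  set j' := ((n + (i:ℤ)) % (l.length:ℤ)).toNat with hj'def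
  have hjlt : j < l.length := by omega
  have hj'lt : j' < l.length := by omega
  rw [List.getD_eq_getElem _ _ (by rw [List.length_rotate]; exact hjlt),
    List.getD_eq_getElem _ _ hj'lt, List.getElem_rotate]
  apply getElem_congr'
  -- (j + i) % l.length = j'
  have hcast : (((j + i) % l.length : ℕ) : ℤ) = ((n + (i:ℤ)) % (l.length:ℤ)) := by
    push_cast
    have hjz : (j : ℤ) = n % (l.length:ℤ) := Int.toNat_of_nonneg hj
    rw [hjz, Int.emod_add_emod]
  omega

/-- For every `k ≥ 2`, the word `W_k W_k` (where `W_k = S^{k-1}(a)` has length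
`F_k`) contains exactly `F_k` distinct subwords of length `F_k`, and all of them are
repeatable. -/
theorem stmt10 (k : ℕ) (hk : 2 ≤ k) :
    Set.ncard {v : List Bool |
        v.length = (fibWord (k - 1)).length ∧ v <:+: (fibWord (k - 1) ++ fibWord (k - 1))}
      = (fibWord (k - 1)).length ∧
    ∀ v : List Bool, v.length = (fibWord (k - 1)).length →
      v <:+: (fibWord (k - 1) ++ fibWord (k - 1)) → Repeatable v := by
  set W := fibWord (k - 1) with hW
  have hFpos : 0 < W.length := length_fibWord_pos _
  have hsub : ∀ v : List Bool, v.length = W.length → v <:+: W ++ W →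
      ∃ i < W.length, v = W.rotate i := by
    rintro v hlen ⟨s, t, hst⟩
    have hlens := congrArg List.length hst
    simp only [List.length_append, hlen] at hlens
    have hsF : s.length ≤ W.length := by omega
    have hvt : v ++ t = (W ++ W).drop s.length := by
      rw [← hst, List.append_assoc, List.drop_left]
    have hv : v = W.rotate s.length := by
      rw [← take_drop_rotate hsF, ← hvt, List.take_append,
        List.take_of_length_le (le_of_eq hlen), hlen, Nat.sub_self, List.take_zero,
        List.append_nil]
    rcases Nat.lt_or_ge s.length W.length with h | h
    · exact ⟨s.length, h, hv⟩
    · exact ⟨0, hFpos, by rw [hv, le_antisymm hsF h, List.rotate_length, List.rotate_zero]⟩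
  have hset : {v : List Bool | v.length = W.length ∧ v <:+: W ++ W}
      = (fun i => W.rotate i) '' (Set.Iio W.length) := by
    ext v
    constructor
    · rintro ⟨hlen, hinf⟩
      obtain ⟨i, hi, rfl⟩ := hsub v hlen hinf
      exact ⟨i, hi, rfl⟩
    · rintro ⟨i, hi, rfl⟩
      exact ⟨List.length_rotate _ _, rotate_infix W (le_of_lt hi)⟩
  have key : ∀ a b, a < b → b < W.length → W.rotate a ≠ W.rotate b := by
    intro a b hab hb hEq
    have h2 : W.rotate (a + (W.length - b)) = W.rotate (b + (W.length - b)) := by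
      rw [← List.rotate_rotate, ← List.rotate_rotate, hEq]
    rw [show b + (W.length - b) = W.length by omega, List.rotate_length] at h2
    exact fibWord_rotate_ne (k-1) (a + (W.length - b)) (by omega) (by rw [← hW]; omega) h2
  constructor
  · rw [hset, Set.ncard_image_of_injOn, ← Finset.coe_Iio, Set.ncard_coe_finset, Nat.card_Iio]
    intro i hi j hj hij
    simp only [Set.mem_Iio] at hi hj
    rcases Nat.lt_trichotomy i j with h | h | h
    · exact absurd hij (key i j h hj)
    · exact h
    · exact absurd hij.symm (key j i h hi)
  · intro v hlen hinf
    obtain ⟨i, hi, rfl⟩ := hsub v hlen hinf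
    refine ⟨(i : ℤ), fun n => ?_⟩
    have hr : (List.range (W.rotate i).length).map uSeq = W := by
      rw [List.length_rotate, hW]
      exact range_map_uSeq (k-1)
    rw [hr]
    exact periodize_rotate W hFpos i n
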